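/- For every 0 < p < ∞, the identity operator on ℓ₁ is not absolutely p-summing: there exists a weakly p-summable sequence (x_j) in ℓ₁ such that ∑_j ‖x_j‖₁^p = ∞. -/

import Mathlib

open Finset
open scoped ENNReal

noncomputable def wal (m k i : ℕ) : ℝ :=
  ∏ j ∈ Finset.range m, (if k / 2 ^ j % 2 = 1 ∧ i / 2 ^ j % 2 = 1 then (-1 : ℝ) else 1)

lemma wal_comm (m k i : ℕ) : wal m k i = wal m i k := by
  unfold wal
  exact Finset.prod_congr rfl fun j _ => if_congr and_comm rfl rfl

lemma wal_abs (m k i : ℕ) : |wal m k i| = 1 := by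
  unfold wal
  rw [Finset.abs_prod]
  refine Finset.prod_eq_one fun j _ => ?_
  split <;> simp

lemma wal_orth {m k l : ℕ} (hk : k < 2 ^ m) (hl : l < 2 ^ m) :
    ∑ i ∈ Finset.range (2 ^ m), wal m k i * wal m l i
      = if k = l then (2 ^ m : ℝ) else 0 := by
  set e := (finFunctionFinEquiv (m := 2) (n := m)) with he
  have digit : ∀ (g : Fin m → Fin 2) (j : Fin m), ((e g : ℕ) / 2 ^ (j:ℕ) % 2) = (g j : ℕ) := by
    intro g j
    have h2 : (e.symm (e g)) j = g j := by rw [e.symm_apply_apply]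
    rw [← h2]; rfl
  have key : ∀ i : ℕ, wal m k i * wal m l i
      = ∏ j : Fin m,
          ((if k / 2 ^ (j : ℕ) % 2 = 1 ∧ (i / 2 ^ (j : ℕ) % 2) = 1 then (-1 : ℝ) else 1) *
           (if l / 2 ^ (j : ℕ) % 2 = 1 ∧ (i / 2 ^ (j : ℕ) % 2) = 1 then (-1 : ℝ) else 1)) := by
    intro i
    rw [Finset.prod_mul_distrib]
    unfold wal
    rw [← Fin.prod_univ_eq_prod_range, ← Fin.prod_univ_eq_prod_range]
  have step1 : ∑ i ∈ Finset.range (2 ^ m), wal m k i * wal m l i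
      = ∑ g : Fin m → Fin 2, ∏ j : Fin m,
          ((if k / 2 ^ (j : ℕ) % 2 = 1 ∧ ((g j : ℕ)) = 1 then (-1 : ℝ) else 1) *
           (if l / 2 ^ (j : ℕ) % 2 = 1 ∧ ((g j : ℕ)) = 1 then (-1 : ℝ) else 1)) := by
    rw [← Fin.sum_univ_eq_sum_range (fun i => wal m k i * wal m l i) (2 ^ m)]
    rw [← Equiv.sum_comp e (fun i : Fin (2 ^ m) => wal m k (i : ℕ) * wal m l (i : ℕ))]
    refine Finset.sum_congr rfl fun g _ => ?_
    rw [key]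
    exact Finset.prod_congr rfl fun j _ => by rw [digit g j]
  have expand := Finset.prod_univ_sum (fun _ : Fin m => (Finset.univ : Finset (Fin 2)))
      (fun j b => ((if k / 2 ^ (j : ℕ) % 2 = 1 ∧ ((b : ℕ)) = 1 then (-1 : ℝ) else 1) *
           (if l / 2 ^ (j : ℕ) % 2 = 1 ∧ ((b : ℕ)) = 1 then (-1 : ℝ) else 1)))
  rw [Fintype.piFinset_univ] at expand
  rw [step1, ← expand]
  by_cases hkl : k = l
  · subst hkl
    rw [if_pos rfl]
    have : ∀ j : Fin m, (∑ b : Fin 2,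
        ((if k / 2 ^ (j : ℕ) % 2 = 1 ∧ ((b : ℕ)) = 1 then (-1 : ℝ) else 1) *
         (if k / 2 ^ (j : ℕ) % 2 = 1 ∧ ((b : ℕ)) = 1 then (-1 : ℝ) else 1))) = 2 := by
      intro j
      have : ∀ b : Fin 2,
          ((if k / 2 ^ (j : ℕ) % 2 = 1 ∧ ((b : ℕ)) = 1 then (-1 : ℝ) else 1) *
           (if k / 2 ^ (j : ℕ) % 2 = 1 ∧ ((b : ℕ)) = 1 then (-1 : ℝ) else 1)) = 1 := by
        intro b; split <;> norm_num
      rw [Finset.sum_congr rfl fun b _ => this b]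
      simp
    rw [Finset.prod_congr rfl fun j _ => this j]
    simp
  · rw [if_neg hkl]
    have hdig : ∃ j : Fin m, k / 2 ^ (j:ℕ) % 2 ≠ l / 2 ^ (j:ℕ) % 2 := by
      by_contra hcon
      push_neg at hcon
      apply hkl
      have : e.symm ⟨k, hk⟩ = e.symm ⟨l, hl⟩ := by
        funext j
        have h1 : ((e.symm ⟨k, hk⟩ j : ℕ)) = k / 2 ^ (j:ℕ) % 2 := rfl
        have h2 : ((e.symm ⟨l, hl⟩ j : ℕ)) = l / 2 ^ (j:ℕ) % 2 := rfl
        exact Fin.ext (by rw [h1, h2, hcon j])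
      have := e.symm.injective this
      exact congrArg Fin.val this
    obtain ⟨j₀, hj₀⟩ := hdig
    refine Finset.prod_eq_zero (Finset.mem_univ j₀) ?_
    rw [Fin.sum_univ_two]
    have hk2 := Nat.mod_two_eq_zero_or_one (k / 2 ^ (j₀:ℕ))
    have hl2 := Nat.mod_two_eq_zero_or_one (l / 2 ^ (j₀:ℕ))
    rcases hk2 with h1 | h1 <;> rcases hl2 with h2 | h2 <;>
      simp [h1, h2] at hj₀ ⊢ <;> norm_num

lemma wal_quad (m : ℕ) (a : ℕ → ℝ) :
    ∑ k ∈ Finset.range (2 ^ m), (∑ i ∈ Finset.range (2 ^ m), wal m k i * a i) ^ 2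
      = 2 ^ m * ∑ i ∈ Finset.range (2 ^ m), (a i) ^ 2 := by
  have expand : ∀ k, (∑ i ∈ Finset.range (2 ^ m), wal m k i * a i) ^ 2
      = ∑ i ∈ Finset.range (2 ^ m), ∑ i' ∈ Finset.range (2 ^ m),
          (a i * a i') * (wal m i k * wal m i' k) := by
    intro k
    rw [sq, Finset.sum_mul_sum]
    exact Finset.sum_congr rfl fun i _ => Finset.sum_congr rfl fun i' _ => by
      rw [wal_comm m k i, wal_comm m k i']; ring
  rw [Finset.sum_congr rfl fun k _ => expand k]
  rw [Finset.sum_comm]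
  have inner : ∀ i ∈ Finset.range (2 ^ m),
      (∑ k ∈ Finset.range (2 ^ m), ∑ i' ∈ Finset.range (2 ^ m),
          (a i * a i') * (wal m i k * wal m i' k)) = 2 ^ m * (a i) ^ 2 := by
    intro i hi
    rw [Finset.sum_comm]
    have : ∀ i' ∈ Finset.range (2 ^ m),
        (∑ k ∈ Finset.range (2 ^ m), (a i * a i') * (wal m i k * wal m i' k))
          = (a i * a i') * if i = i' then (2 ^ m : ℝ) else 0 := by
      intro i' hi'
      rw [← Finset.mul_sum, wal_orth (Finset.mem_range.mp hi) (Finset.mem_range.mp hi')]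
    rw [Finset.sum_congr rfl this]
    simp only [mul_ite, mul_zero, Finset.sum_ite_eq, hi, if_true]
    ring
  rw [Finset.sum_congr rfl inner, ← Finset.mul_sum]

def mIdx (n : ℕ) : ℕ := Nat.log 2 (n + 1)
def kIdx (n : ℕ) : ℕ := n + 1 - 2 ^ mIdx n

lemma pow_mIdx_le (n : ℕ) : 2 ^ mIdx n ≤ n + 1 := Nat.pow_log_le_self 2 n.succ_ne_zero

lemma kIdx_lt (n : ℕ) : kIdx n < 2 ^ mIdx n := by
  have h := Nat.lt_pow_succ_log_self (by norm_num : 1 < 2) (n + 1)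
  have h2 : 2 ^ (mIdx n + 1) = 2 * 2 ^ mIdx n := by rw [pow_succ]; ring
  have := pow_mIdx_le n
  unfold kIdx
  unfold mIdx at *
  omega

lemma idx_eq (n : ℕ) : 2 ^ mIdx n + kIdx n = n + 1 := by
  have := pow_mIdx_le n
  unfold kIdx
  omega

lemma mIdx_spec {m k : ℕ} (hk : k < 2 ^ m) : mIdx (2 ^ m + k - 1) = m := by
  have h1 : 1 ≤ 2 ^ m := Nat.one_le_two_pow
  have h2 : 2 ^ m + k - 1 + 1 = 2 ^ m + k := by omega
  unfold mIdx
  rw [h2]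
  exact Nat.log_eq_of_pow_le_of_lt_pow (by omega) (by rw [pow_succ]; omega)

lemma kIdx_spec {m k : ℕ} (hk : k < 2 ^ m) : kIdx (2 ^ m + k - 1) = k := by
  have h1 : 1 ≤ 2 ^ m := Nat.one_le_two_pow
  unfold kIdx
  rw [mIdx_spec hk]
  omega

lemma mIdx_le_self (n : ℕ) : mIdx n ≤ n := by
  have h1 := pow_mIdx_le n
  have h2 : mIdx n < 2 ^ mIdx n := Nat.lt_two_pow_self
  omega

noncomputable def coef (p : ℝ) (n : ℕ) (j : ℕ) : ℝ :=
  (2 : ℝ) ^ (-(mIdx n : ℝ) / p) * ((2 : ℝ) ^ mIdx n)⁻¹ * wal (mIdx n) (kIdx n) (j - 2 ^ mIdx n)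

noncomputable def xvec (p : ℝ) (n : ℕ) : lp (fun _ : ℕ => ℝ) 1 :=
  ∑ j ∈ (Finset.range (2 ^ mIdx n)).image (fun i => 2 ^ mIdx n + i),
    lp.single 1 j (coef p n j)

lemma xvec_norm (p : ℝ) (n : ℕ) : ‖xvec p n‖ = (2 : ℝ) ^ (-(mIdx n : ℝ) / p) := by
  have h := lp.norm_sum_single (p := (1 : ℝ≥0∞)) (by simp) (coef p n)
    ((Finset.range (2 ^ mIdx n)).image (fun i => 2 ^ mIdx n + i))
  simp only [ENNReal.toReal_one, Real.rpow_one] at h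
  rw [xvec, h, Finset.sum_image (by intro a _ b _ h; exact Nat.add_left_cancel h)]
  have : ∀ i ∈ Finset.range (2 ^ mIdx n),
      ‖coef p n (2 ^ mIdx n + i)‖ = (2 : ℝ) ^ (-(mIdx n : ℝ) / p) * ((2 : ℝ) ^ mIdx n)⁻¹ := by
    intro i _
    rw [coef, Nat.add_sub_cancel_left]
    rw [Real.norm_eq_abs, abs_mul, wal_abs, mul_one, abs_mul]
    rw [abs_of_pos (Real.rpow_pos_of_pos (by norm_num) _), abs_of_pos (by positivity)]
  rw [Finset.sum_congr rfl this, Finset.sum_const, Finset.card_range, nsmul_eq_mul]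
  push_cast
  field_simp

lemma xvec_apply (p : ℝ) (n : ℕ) (φ : lp (fun _ : ℕ => ℝ) 1 →L[ℝ] ℝ) :
    φ (xvec p n) = (2 : ℝ) ^ (-(mIdx n : ℝ) / p) *
      (((2 : ℝ) ^ mIdx n)⁻¹ * ∑ i ∈ Finset.range (2 ^ mIdx n),
        wal (mIdx n) (kIdx n) i * φ (lp.single 1 (2 ^ mIdx n + i) 1)) := by
  rw [xvec, map_sum, Finset.sum_image (by intro a _ b _ h; exact Nat.add_left_cancel h)]
  have step : ∀ i ∈ Finset.range (2 ^ mIdx n),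
      φ (lp.single 1 (2 ^ mIdx n + i) (coef p n (2 ^ mIdx n + i)))
        = ((2 : ℝ) ^ (-(mIdx n : ℝ) / p) * ((2 : ℝ) ^ mIdx n)⁻¹ * wal (mIdx n) (kIdx n) i)
            * φ (lp.single 1 (2 ^ mIdx n + i) 1) := by
    intro i _
    have hc : coef p n (2 ^ mIdx n + i)
        = (2 : ℝ) ^ (-(mIdx n : ℝ) / p) * ((2 : ℝ) ^ mIdx n)⁻¹ * wal (mIdx n) (kIdx n) i := by
      rw [coef, Nat.add_sub_cancel_left]
    have hs : lp.single (1 : ℝ≥0∞) (2 ^ mIdx n + i) (coef p n (2 ^ mIdx n + i))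
        = (coef p n (2 ^ mIdx n + i)) •
            (lp.single 1 (2 ^ mIdx n + i) (1 : ℝ) : lp (fun _ : ℕ => ℝ) 1) := by
      rw [← lp.single_smul, smul_eq_mul, mul_one]
    rw [hs, map_smul, smul_eq_mul, hc]
  rw [Finset.sum_congr rfl step, Finset.mul_sum, Finset.mul_sum]
  exact Finset.sum_congr rfl fun i _ => by ring

lemma block_bound {p M : ℝ} (hp : 0 < p) (hM : 0 < M) (m : ℕ) (b : ℕ → ℝ)
    (hb : ∀ i, |b i| ≤ M) :
    ∑ k ∈ Finset.range (2 ^ m),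
        |((2 : ℝ) ^ m)⁻¹ * ∑ i ∈ Finset.range (2 ^ m), wal m k i * b i| ^ p
      ≤ M ^ p * ((2 : ℝ) ^ m) ^ (1 - min p 2 / 2) := by
  set B : ℝ := (2 : ℝ) ^ m with hB
  have hBpos : 0 < B := by positivity
  set t : ℕ → ℝ := fun k => B⁻¹ * ∑ i ∈ Finset.range (2 ^ m), wal m k i * b i with ht
  have habs : ∀ k, |t k| ≤ M := by
    intro k
    have h1 : |∑ i ∈ Finset.range (2 ^ m), wal m k i * b i| ≤ 2 ^ m * M := by
      refine (Finset.abs_sum_le_sum_abs _ _).trans ?_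
      have : ∀ i ∈ Finset.range (2 ^ m), |wal m k i * b i| ≤ M := by
        intro i _
        rw [abs_mul, wal_abs, one_mul]
        exact hb i
      refine (Finset.sum_le_sum this).trans ?_
      rw [Finset.sum_const, Finset.card_range, nsmul_eq_mul]
      push_cast
      exact le_refl _
    calc |t k| = B⁻¹ * |∑ i ∈ Finset.range (2 ^ m), wal m k i * b i| := by
          rw [ht]
          simp only [abs_mul, abs_of_pos (inv_pos.mpr hBpos)]
      _ ≤ B⁻¹ * (2 ^ m * M) := mul_le_mul_of_nonneg_left h1 (by positivity)
      _ = M := by rw [hB]; push_cast; field_simp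
  have hsq : ∑ k ∈ Finset.range (2 ^ m), (t k) ^ 2 ≤ M ^ 2 := by
    have expand : ∀ k, (t k) ^ 2
        = B⁻¹ ^ 2 * (∑ i ∈ Finset.range (2 ^ m), wal m k i * b i) ^ 2 := by
      intro k; rw [ht]; ring
    rw [Finset.sum_congr rfl fun k _ => expand k, ← Finset.mul_sum, wal_quad]
    have hbsq : ∑ i ∈ Finset.range (2 ^ m), (b i) ^ 2 ≤ 2 ^ m * M ^ 2 := by
      have : ∀ i ∈ Finset.range (2 ^ m), (b i) ^ 2 ≤ M ^ 2 := by
        intro i _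
        rw [← sq_abs]
        exact pow_le_pow_left₀ (abs_nonneg _) (hb i) 2
      refine (Finset.sum_le_sum this).trans ?_
      rw [Finset.sum_const, Finset.card_range, nsmul_eq_mul]
      push_cast
      exact le_refl _
    calc B⁻¹ ^ 2 * (2 ^ m * ∑ i ∈ Finset.range (2 ^ m), (b i) ^ 2)
        ≤ B⁻¹ ^ 2 * (2 ^ m * (2 ^ m * M ^ 2)) := by
          refine mul_le_mul_of_nonneg_left ?_ (by positivity)
          exact mul_le_mul_of_nonneg_left hbsq (by positivity)
      _ = M ^ 2 := by
          rw [hB]; push_cast; field_simp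
  have htwo : ∀ x : ℝ, x ^ (2:ℝ) = x ^ 2 := fun x => by
    rw [show ((2:ℝ)) = ((2:ℕ):ℝ) by norm_num, Real.rpow_natCast]
  show ∑ k ∈ Finset.range (2 ^ m), |t k| ^ p ≤ M ^ p * B ^ (1 - min p 2 / 2)
  rcases le_total 2 p with hcase | hcase
  · -- p ≥ 2
    rw [min_eq_right hcase]
    norm_num
    have per : ∀ k, |t k| ^ p ≤ M ^ (p - 2) * t k ^ 2 := by
      intro k
      have h1 : |t k| ^ p = |t k| ^ (p - 2) * |t k| ^ (2:ℝ) := by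
        rw [← Real.rpow_add' (abs_nonneg _) (by simpa using hp.ne')]
        norm_num
      rw [h1, htwo, sq_abs]
      refine mul_le_mul_of_nonneg_right ?_ (sq_nonneg _)
      exact Real.rpow_le_rpow (abs_nonneg _) (habs k) (by linarith)
    calc ∑ k ∈ Finset.range (2 ^ m), |t k| ^ p
        ≤ ∑ k ∈ Finset.range (2 ^ m), M ^ (p - 2) * t k ^ 2 :=
          Finset.sum_le_sum fun k _ => per k
      _ = M ^ (p - 2) * ∑ k ∈ Finset.range (2 ^ m), t k ^ 2 := by rw [← Finset.mul_sum]
      _ ≤ M ^ (p - 2) * M ^ 2 := by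
          refine mul_le_mul_of_nonneg_left hsq (Real.rpow_nonneg hM.le _)
      _ = M ^ p := by
          rw [← htwo, ← Real.rpow_add hM]
          norm_num
  · -- p ≤ 2
    rw [min_eq_left hcase]
    have hP : 1 ≤ 2 / p := (one_le_div hp).mpr hcase
    have hcard : ∑ _k ∈ Finset.range (2 ^ m), B⁻¹ = 1 := by
      rw [Finset.sum_const, Finset.card_range, nsmul_eq_mul, hB]
      push_cast
      field_simp
    have main := Real.arith_mean_le_rpow_mean (Finset.range (2 ^ m))
      (fun _ => B⁻¹) (fun k => |t k| ^ p)
      (fun k _ => by positivity) hcard (fun k _ => by positivity) hP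
    have hzP : ∀ k, (|t k| ^ p) ^ (2 / p) = t k ^ 2 := by
      intro k
      rw [← Real.rpow_mul (abs_nonneg _), show p * (2 / p) = 2 by field_simp, htwo, sq_abs]
    have hsum2 : ∑ i ∈ Finset.range (2 ^ m), B⁻¹ * (|t i| ^ p) ^ (2 / p)
        = B⁻¹ * ∑ k ∈ Finset.range (2 ^ m), t k ^ 2 := by
      rw [Finset.mul_sum]
      exact Finset.sum_congr rfl fun k _ => by rw [hzP k]
    have hLHS : ∑ i ∈ Finset.range (2 ^ m), B⁻¹ * |t i| ^ p
        = B⁻¹ * ∑ k ∈ Finset.range (2 ^ m), |t k| ^ p := by rw [Finset.mul_sum]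
    simp only [hLHS, hsum2, one_div_div] at main
    have step2 : (B⁻¹ * ∑ k ∈ Finset.range (2 ^ m), t k ^ 2) ^ (p / 2)
        ≤ (B⁻¹ * M ^ 2) ^ (p / 2) := by
      refine Real.rpow_le_rpow (by positivity) ?_ (by positivity)
      exact mul_le_mul_of_nonneg_left hsq (by positivity)
    have step3 : B⁻¹ * ∑ k ∈ Finset.range (2 ^ m), |t k| ^ p ≤ (B⁻¹ * M ^ 2) ^ (p / 2) :=
      main.trans step2
    have hfin : (B⁻¹ * M ^ 2) ^ (p / 2) = M ^ p * B ^ (-(p / 2)) := by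
      rw [Real.mul_rpow (by positivity) (by positivity)]
      rw [← Real.rpow_natCast M 2, ← Real.rpow_mul hM.le,
        show (2:ℕ) * (p / 2) = p by push_cast; ring]
      rw [Real.inv_rpow hBpos.le, ← Real.rpow_neg hBpos.le]
      ring
    have : ∑ k ∈ Finset.range (2 ^ m), |t k| ^ p ≤ B * (M ^ p * B ^ (-(p / 2))) := by
      rw [← hfin]
      calc ∑ k ∈ Finset.range (2 ^ m), |t k| ^ p
          = B * (B⁻¹ * ∑ k ∈ Finset.range (2 ^ m), |t k| ^ p) := by
            field_simp
        _ ≤ B * (B⁻¹ * M ^ 2) ^ (p / 2) := mul_le_mul_of_nonneg_left step3 hBpos.le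
    refine this.trans (le_of_eq ?_)
    rw [show B * (M ^ p * B ^ (-(p / 2))) = M ^ p * (B ^ (1:ℝ) * B ^ (-(p / 2))) by
      rw [Real.rpow_one]; ring]
    rw [← Real.rpow_add hBpos, show (1:ℝ) + -(p / 2) = 1 - p / 2 by ring]

lemma norm_single_one (j : ℕ) : ‖(lp.single 1 j (1:ℝ) : lp (fun _ : ℕ => ℝ) 1)‖ = 1 := by
  have := lp.norm_single (p := (1:ℝ≥0∞)) (E := fun _ : ℕ => ℝ) (by norm_num) j (1:ℝ)
  simpa using this

lemma two_rpow_div_pow (p : ℝ) (hp : 0 < p) (m : ℕ) :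
    ((2 : ℝ) ^ (-(m : ℝ) / p)) ^ p = ((2 : ℝ) ^ m)⁻¹ := by
  rw [← Real.rpow_mul (by norm_num : (0:ℝ) ≤ 2), div_mul_cancel₀ _ hp.ne']
  rw [Real.rpow_neg (by norm_num), Real.rpow_natCast]

theorem stmt12 (p : ℝ) (hp : 0 < p) :
    ∃ x : ℕ → lp (fun _ : ℕ => ℝ) 1,
      (∀ φ : lp (fun _ : ℕ => ℝ) 1 →L[ℝ] ℝ, Summable fun j => |φ (x j)| ^ p) ∧
        ¬ Summable fun j => ‖x j‖ ^ p := by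
  refine ⟨xvec p, fun φ => ?_, fun hsum => ?_⟩
  · -- weak p-summability
    set f : ℕ → ℝ := fun n => |φ (xvec p n)| ^ p with hf
    have hfnonneg : ∀ n, 0 ≤ f n := fun n => Real.rpow_nonneg (abs_nonneg _) _
    set M : ℝ := ‖φ‖ + 1 with hM
    have hMpos : 0 < M := by positivity
    set q : ℝ := min p 2 with hq
    have hqpos : 0 < q := lt_min hp (by norm_num)
    set r : ℝ := (2 : ℝ) ^ (-q / 2) with hr
    have hrpos : 0 < r := Real.rpow_pos_of_pos (by norm_num) _
    have hrlt : r < 1 := by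
      refine Real.rpow_lt_one_of_one_lt_of_neg (by norm_num) ?_
      linarith
    have ha : ∀ j : ℕ, |φ (lp.single 1 j (1 : ℝ))| ≤ M := by
      intro j
      have h2 := φ.le_opNorm (lp.single 1 j (1 : ℝ))
      rw [norm_single_one j, mul_one, Real.norm_eq_abs] at h2
      exact h2.trans (by rw [hM]; linarith)
    have blockbnd : ∀ m : ℕ,
        ∑ k ∈ Finset.range (2 ^ m), f (2 ^ m + k - 1) ≤ M ^ p * r ^ m := by
      intro m
      have evalf : ∀ k ∈ Finset.range (2 ^ m), f (2 ^ m + k - 1)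
          = ((2 : ℝ) ^ m)⁻¹ * |((2 : ℝ) ^ m)⁻¹ *
              ∑ i ∈ Finset.range (2 ^ m), wal m k i * φ (lp.single 1 (2 ^ m + i) 1)| ^ p := by
        intro k hk
        have hk' := Finset.mem_range.mp hk
        rw [hf]
        dsimp only
        have hx := xvec_apply p (2 ^ m + k - 1) φ
        rw [mIdx_spec hk', kIdx_spec hk'] at hx
        rw [hx, abs_mul, abs_of_pos (Real.rpow_pos_of_pos (by norm_num) _)]
        rw [Real.mul_rpow (Real.rpow_pos_of_pos (by norm_num) _).le (abs_nonneg _)]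
        rw [two_rpow_div_pow p hp m]
      rw [Finset.sum_congr rfl evalf, ← Finset.mul_sum]
      have hbb := block_bound hp hMpos m (fun i => φ (lp.single 1 (2 ^ m + i) 1))
        (fun i => ha _)
      calc ((2 : ℝ) ^ m)⁻¹ * ∑ k ∈ Finset.range (2 ^ m), |((2 : ℝ) ^ m)⁻¹ *
              ∑ i ∈ Finset.range (2 ^ m), wal m k i * φ (lp.single 1 (2 ^ m + i) 1)| ^ p
          ≤ ((2 : ℝ) ^ m)⁻¹ * (M ^ p * ((2 : ℝ) ^ m) ^ (1 - q / 2)) := by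
            refine mul_le_mul_of_nonneg_left ?_ (by positivity)
            exact hbb
        _ = M ^ p * r ^ m := by
            rw [hr, ← Real.rpow_natCast ((2:ℝ) ^ (-q / 2)) m,
              ← Real.rpow_mul (by norm_num : (0:ℝ) ≤ 2)]
            rw [← Real.rpow_natCast (2:ℝ) m, ← Real.rpow_mul (by norm_num : (0:ℝ) ≤ 2),
              ← Real.rpow_neg (by norm_num : (0:ℝ) ≤ 2)]
            rw [show (2:ℝ) ^ (-(m:ℝ)) * (M ^ p * (2:ℝ) ^ ((m:ℝ) * (1 - q / 2)))
                = M ^ p * ((2:ℝ) ^ (-(m:ℝ)) * (2:ℝ) ^ ((m:ℝ) * (1 - q / 2))) from by ring,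
              ← Real.rpow_add (by norm_num : (0:ℝ) < 2),
              show -(m:ℝ) + (m:ℝ) * (1 - q / 2) = -q / 2 * (m:ℝ) from by ring]
    refine summable_of_sum_range_le (c := M ^ p * (1 - r)⁻¹) hfnonneg ?_
    intro N
    have reindex : ∑ n ∈ Finset.range N, f n
        ≤ ∑ m ∈ Finset.range N, ∑ k ∈ Finset.range (2 ^ m), f (2 ^ m + k - 1) := by
      set F : (Σ _ : ℕ, ℕ) → ℝ := fun x => f (2 ^ x.1 + x.2 - 1) with hF
      set σ : ℕ → (Σ _ : ℕ, ℕ) := fun n => ⟨mIdx n, kIdx n⟩ with hσ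
      have hfn : ∀ n, f n = F (σ n) := by
        intro n
        have := idx_eq n
        simp only [hF, hσ]
        congr 1
        omega
      have hinj : ∀ a ∈ Finset.range N, ∀ b ∈ Finset.range N, σ a = σ b → a = b := by
        intro a _ b _ h
        have h1 : mIdx a = mIdx b := congrArg Sigma.fst h
        have h2 : kIdx a = kIdx b := by
          simp only [hσ, Sigma.mk.inj_iff] at h
          exact eq_of_heq h.2
        have e1 := idx_eq a
        have e2 := idx_eq b
        rw [h1, h2] at e1
        exact Nat.succ_injective (e1.symm.trans e2)
      calc ∑ n ∈ Finset.range N, f n = ∑ n ∈ Finset.range N, F (σ n) :=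
            Finset.sum_congr rfl fun n _ => hfn n
        _ = ∑ x ∈ (Finset.range N).image σ, F x := (Finset.sum_image hinj).symm
        _ ≤ ∑ x ∈ (Finset.range N).sigma (fun m => Finset.range (2 ^ m)), F x := by
            refine Finset.sum_le_sum_of_subset_of_nonneg ?_ (fun x _ _ => hfnonneg _)
            intro x hx
            obtain ⟨n, hn, rfl⟩ := Finset.mem_image.mp hx
            rw [Finset.mem_sigma]
            refine ⟨Finset.mem_range.mpr ?_, Finset.mem_range.mpr (kIdx_lt n)⟩
            exact lt_of_le_of_lt (mIdx_le_self n) (Finset.mem_range.mp hn)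
        _ = ∑ m ∈ Finset.range N, ∑ k ∈ Finset.range (2 ^ m), f (2 ^ m + k - 1) :=
            Finset.sum_sigma _ _ _
    refine reindex.trans ?_
    calc ∑ m ∈ Finset.range N, ∑ k ∈ Finset.range (2 ^ m), f (2 ^ m + k - 1)
        ≤ ∑ m ∈ Finset.range N, M ^ p * r ^ m :=
          Finset.sum_le_sum fun m _ => blockbnd m
      _ = M ^ p * ∑ m ∈ Finset.range N, r ^ m := by rw [← Finset.mul_sum]
      _ ≤ M ^ p * (1 - r)⁻¹ := by
          refine mul_le_mul_of_nonneg_left ?_ (by positivity)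
          refine Summable.sum_le_tsum (L := SummationFilter.unconditional ℕ) (Finset.range N) (fun m _ => by positivity) ?_ |>.trans ?_
          · exact summable_geometric_of_lt_one hrpos.le hrlt
          · rw [tsum_geometric_of_lt_one hrpos.le hrlt]
  · -- not absolutely p-summable
    have hterm : ∀ n : ℕ, ((n : ℝ) + 1)⁻¹ ≤ ‖xvec p n‖ ^ p := by
      intro n
      rw [xvec_norm, two_rpow_div_pow p hp]
      have h1 : (2 : ℝ) ^ mIdx n ≤ (n : ℝ) + 1 := by
        have := pow_mIdx_le n
        push_cast
        exact_mod_cast this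
      exact inv_anti₀ (by positivity) h1
    have : Summable (fun n : ℕ => ((n : ℝ) + 1)⁻¹) :=
      Summable.of_nonneg_of_le (fun n => by positivity) hterm hsum
    have h2 : Summable (fun n : ℕ => ((n : ℕ) : ℝ)⁻¹) := by
      rw [← summable_nat_add_iff 1]
      exact_mod_cast this
    exact Real.not_summable_natCast_inv h2
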